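/- Let X be a finite simple graph all of whose odd cycles have length at least 2k+1 (k ≥ 1), let x be a vertex of X, and let m ≥ 2. If the subgraph of X induced on the complement V(X) ∖ B(x, k−1) admits a proper coloring in m−1 colors, then X admits a proper coloring in m colors. -/

import Mathlib

open SimpleGraph

private lemma excise {V : Type*} [DecidableEq V] (X : SimpleGraph V) :
    ∀ {a b : V} (p : X.Walk a b), ¬ p.support.Nodup →
      ∃ (y : V) (c : X.Walk y y) (p' : X.Walk a b),
        0 < c.length ∧ c.length + p'.length = p.length := by
  intro a b p
  induction p with
  | nil => intro h; simp at h
  | @cons a w b h q ih =>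
    intro hnd
    simp only [Walk.support_cons, List.nodup_cons] at hnd
    by_cases ha : a ∈ q.support
    · refine ⟨a, Walk.cons h (q.takeUntil a ha), q.dropUntil a ha, by simp, ?_⟩
      have := congrArg Walk.length (q.take_spec ha)
      rw [Walk.length_append] at this
      simp only [Walk.length_cons]
      omega
    · have hq : ¬ q.support.Nodup := by tauto
      obtain ⟨y, c, p', hc, hl⟩ := ih hq
      exact ⟨y, c, Walk.cons h p', hc, by simp only [Walk.length_cons]; omega⟩

private lemma edge_end {V : Type*} {X : SimpleGraph V} {u : V} :
    ∀ {v : V} (p : X.Walk v u), p.IsPath → s(u, v) ∈ p.edges → p.length = 1 := by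
  intro v p
  induction p with
  | nil => intro _ he; simp at he
  | @cons v w b h q ih =>
    intro hp he
    rw [Walk.cons_isPath_iff] at hp
    simp only [Walk.edges_cons, List.mem_cons] at he
    rcases he with he | he
    · rw [Sym2.eq_iff] at he
      rcases he with ⟨rfl, rfl⟩ | ⟨rfl, -⟩
      · exact absurd h (X.irrefl)
      · have : q = Walk.nil := Walk.isPath_iff_eq_nil.mp hp.1
        subst this; simp
    · exact absurd (q.snd_mem_support_of_mem_edges he) hp.2

private lemma cycle_of_nodup {V : Type*} {X : SimpleGraph V} {u : V} (w : X.Walk u u)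
    (hodd : Odd w.length) (hnd : w.support.tail.Nodup) : w.IsCycle := by
  cases w with
  | nil => simp at hodd
  | @cons u v _ h p =>
    simp only [Walk.support_cons, List.tail_cons] at hnd
    have hp : p.IsPath := (Walk.isPath_def p).mpr hnd
    rw [Walk.cons_isCycle_iff]
    refine ⟨hp, fun he => ?_⟩
    have h1 := edge_end p hp he
    simp only [Walk.length_cons, h1] at hodd
    rw [Nat.odd_iff] at hodd
    omega

private lemma extract_odd_cycle {V : Type*} [DecidableEq V] {X : SimpleGraph V} :
    ∀ (n : ℕ) {u : V} (w : X.Walk u u), w.length = n → Odd n →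
      ∃ (y : V) (c : X.Walk y y), c.IsCycle ∧ Odd c.length ∧ c.length ≤ n := by
  intro n
  induction n using Nat.strong_induction_on with
  | _ n ih =>
    intro u w hw hodd
    cases w with
    | nil =>
      rw [Nat.odd_iff] at hodd
      simp only [Walk.length_nil] at hw
      omega
    | @cons u v _ h p =>
      by_cases hnd : p.support.Nodup
      · have : (Walk.cons h p).IsCycle := by
          apply cycle_of_nodup _ (hw ▸ hodd)
          simpa using hnd
        exact ⟨u, Walk.cons h p, this, hw ▸ hodd, le_of_eq hw⟩
      · obtain ⟨y, c, p', hc, hl⟩ := excise X p hnd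
        simp only [Walk.length_cons] at hw
        have hlt : c.length < n := by omega
        have hlt2 : (Walk.cons h p').length < n := by simp [Walk.length_cons]; omega
        rw [Nat.odd_iff] at hodd
        by_cases hco : c.length % 2 = 1
        · obtain ⟨z, c', h1, h2, h3⟩ := ih c.length hlt c rfl (Nat.odd_iff.mpr hco)
          exact ⟨z, c', h1, h2, by omega⟩
        · have hop : Odd (Walk.cons h p').length := by
            rw [Nat.odd_iff]; simp only [Walk.length_cons]; omega
          obtain ⟨z, c', h1, h2, h3⟩ := ih _ hlt2 (Walk.cons h p') rfl hop
          exact ⟨z, c', h1, h2, by omega⟩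

theorem color_extension {V : Type*} [Fintype V] (X : SimpleGraph V) (k m : ℕ) (x : V)
    (hk : 1 ≤ k) (hm : 2 ≤ m)
    (hodd : ∀ (v : V) (w : X.Walk v v), w.IsCycle → Odd w.length → 2 * k + 1 ≤ w.length)
    (hcol : (X.induce ({y : V | ∃ w : X.Walk x y, w.length ≤ k - 1} : Set V)ᶜ).Colorable (m - 1)) :
    X.Colorable m := by
  classical
  set B : Set V := {y : V | ∃ w : X.Walk x y, w.length ≤ k - 1} with hB
  obtain C := Classical.choice hcol
  -- basic facts about B
  have hdistB : ∀ y ∈ B, X.dist x y ≤ k - 1 ∧ X.Reachable x y := by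
    rintro y ⟨w, hw⟩
    exact ⟨le_trans (X.dist_le w) hw, ⟨w⟩⟩
  -- parity lemma
  have hpar : ∀ u ∈ B, ∀ v ∈ B, X.Adj u v → X.dist x u % 2 ≠ X.dist x v % 2 := by
    intro u hu v hv huv heq
    obtain ⟨hdu, hru⟩ := hdistB u hu
    obtain ⟨hdv, hrv⟩ := hdistB v hv
    obtain ⟨pu, hpu⟩ := hru.exists_walk_length_eq_dist
    obtain ⟨pv, hpv⟩ := hrv.exists_walk_length_eq_dist
    set w : X.Walk x x := pu.append (Walk.cons huv pv.reverse) with hw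
    have hlen : w.length = X.dist x u + X.dist x v + 1 := by
      simp [hw, Walk.length_append, Walk.length_cons, Walk.length_reverse, hpu, hpv]
      omega
    have hwodd : Odd w.length := by rw [hlen, Nat.odd_iff]; omega
    obtain ⟨y, c, hc, hco, hcl⟩ := extract_odd_cycle w.length w rfl hwodd
    have := hodd y c hc hco
    omega
  -- coloring
  refine ⟨Coloring.mk
    (fun y => if h : y ∈ B then
        (if X.dist x y % 2 = (k - 1) % 2 then ⟨m - 1, by omega⟩ else ⟨0, by omega⟩)
      else Fin.castLE (Nat.sub_le m 1) (C ⟨y, h⟩)) ?_⟩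
  intro u v huv
  by_cases hu : u ∈ B <;> by_cases hv : v ∈ B
  · -- both in B
    simp only [dif_pos hu, dif_pos hv]
    have hne := hpar u hu v hv huv
    have hh1 : X.dist x u % 2 < 2 := Nat.mod_lt _ (by omega)
    have hh2 : X.dist x v % 2 < 2 := Nat.mod_lt _ (by omega)
    have hh3 : (k - 1) % 2 < 2 := Nat.mod_lt _ (by omega)
    by_cases h1 : X.dist x u % 2 = (k - 1) % 2 <;>
      by_cases h2 : X.dist x v % 2 = (k - 1) % 2
    · omega
    · rw [if_pos h1, if_neg h2]
      simp only [ne_eq, Fin.mk.injEq]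
      omega
    · rw [if_neg h1, if_pos h2]
      simp only [ne_eq, Fin.mk.injEq]
      omega
    · omega
  · -- u in B, v not in B: then dist x u = k - 1
    have hdu : X.dist x u = k - 1 := by
      obtain ⟨hle, hr⟩ := hdistB u hu
      by_contra hne
      have hlt : X.dist x u + 1 ≤ k - 1 := by omega
      obtain ⟨pu, hpu⟩ := hr.exists_walk_length_eq_dist
      exact hv ⟨pu.append (Walk.cons huv Walk.nil), by
        simp [Walk.length_append, hpu]; omega⟩
    simp only [dif_pos hu, dif_neg hv, hdu, if_pos rfl]
    intro hf
    have h1 : m - 1 = (C ⟨v, hv⟩).val := congrArg Fin.val hf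
    have h2 := (C ⟨v, hv⟩).isLt
    omega
  · -- v in B, u not in B
    have hdv : X.dist x v = k - 1 := by
      obtain ⟨hle, hr⟩ := hdistB v hv
      by_contra hne
      have hlt : X.dist x v + 1 ≤ k - 1 := by omega
      obtain ⟨pv, hpv⟩ := hr.exists_walk_length_eq_dist
      exact hu ⟨pv.append (Walk.cons huv.symm Walk.nil), by
        simp [Walk.length_append, hpv]; omega⟩
    simp only [dif_pos hv, dif_neg hu, hdv, if_pos rfl]
    intro hf
    have h1 : (C ⟨u, hu⟩).val = m - 1 := congrArg Fin.val hf
    have h2 := (C ⟨u, hu⟩).isLt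
    omega
  · -- both outside
    simp only [dif_neg hu, dif_neg hv]
    intro hf
    have hadj : (X.induce (Bᶜ : Set V)).Adj ⟨u, hu⟩ ⟨v, hv⟩ := by
      simp [comap_adj, huv]
    exact C.valid hadj (Fin.castLE_injective _ hf)
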